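/- Let L be a field of characteristic different from 2 and 3, and let C : y³ = x⁴ + g₂x² + g₃x + g₄ be a Picard curve in normal form over L with g₃ ≠ 0. Suppose the three invariants j₁ = g₂³/g₃², j₂ = g₂g₄/g₃², j₃ = g₄³/g₃⁴ all lie in a subfield k of L. Then C has a model over k: there exist g₂', g₃', g₄' ∈ k with g₃' ≠ 0 such that x⁴ + g₂'x² + g₃'x + g₄' is squarefree and the normal-form Picard curve y³ = x⁴ + g₂'x² + g₃'x + g₄' over k has the same invariant triple (j₁, j₂, j₃) as C. -/

import Mathlib

open Polynomial

private lemma squarefree_of_comp_linear {L : Type*} [Field L] {p : L[X]} {s : L} (hs : s ≠ 0)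
    (hp : Squarefree (p.comp (C s * X))) : Squarefree p := by
  intro a ha
  have h2 : a.comp (C s * X) * a.comp (C s * X) ∣ p.comp (C s * X) := by
    obtain ⟨b, hb⟩ := ha
    exact ⟨b.comp (C s * X), by rw [hb]; simp [mul_comp]⟩
  have hu := hp _ h2
  rw [isUnit_iff] at hu ⊢
  obtain ⟨c, hc, hac⟩ := hu
  refine ⟨c, hc, ?_⟩
  have hx : (C s * X).comp (C (s⁻¹) * X) = (X : L[X]) := by
    rw [mul_comp, C_comp, X_comp, ← mul_assoc, ← C_mul, mul_inv_cancel₀ hs, C_1, one_mul]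
  have : a = (a.comp (C s * X)).comp (C (s⁻¹) * X) := by
    rw [comp_assoc, hx, comp_X]
  rw [this, ← hac, C_comp]

private lemma squarefree_scale {L : Type*} [Field L] {g₂ g₃ g₄ : L}
    (h : Squarefree (X ^ 4 + C g₂ * X ^ 2 + C g₃ * X + C g₄ : L[X]))
    {s : L} (hs : s ≠ 0) :
    Squarefree (X ^ 4 + C (g₂ * s ^ 2) * X ^ 2 + C (g₃ * s ^ 3) * X + C (g₄ * s ^ 4) : L[X]) := by
  have key : (X ^ 4 + C (g₂ * s ^ 2) * X ^ 2 + C (g₃ * s ^ 3) * X + C (g₄ * s ^ 4)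
        : L[X]).comp (C s * X)
      = C (s ^ 4) * (X ^ 4 + C g₂ * X ^ 2 + C g₃ * X + C g₄) := by
    simp only [add_comp, mul_comp, pow_comp, X_comp, C_comp, C_mul, C_pow]
    ring
  apply squarefree_of_comp_linear hs
  rw [key]
  refine h.squarefree_of_dvd ⟨C (s⁻¹ ^ 4), ?_⟩
  rw [mul_right_comm, ← C_mul, ← mul_pow, mul_inv_cancel₀ hs, one_pow, C_1, one_mul]

private lemma model_of_scale {L : Type*} [Field L] (k : Subfield L) {g₂ g₃ g₄ s : L}
    (hg₃ : g₃ ≠ 0) (hs : s ≠ 0)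
    (hsf : Squarefree (X ^ 4 + C g₂ * X ^ 2 + C g₃ * X + C g₄ : L[X]))
    (m2 : g₂ * s ^ 2 ∈ k) (m3 : g₃ * s ^ 3 ∈ k) (m4 : g₄ * s ^ 4 ∈ k) :
    ∃ g₂' g₃' g₄' : L, g₂' ∈ k ∧ g₃' ∈ k ∧ g₄' ∈ k ∧ g₃' ≠ 0 ∧
      Squarefree (X ^ 4 + C g₂' * X ^ 2 + C g₃' * X + C g₄' : L[X]) ∧
      g₂' ^ 3 / g₃' ^ 2 = g₂ ^ 3 / g₃ ^ 2 ∧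
      g₂' * g₄' / g₃' ^ 2 = g₂ * g₄ / g₃ ^ 2 ∧
      g₄' ^ 3 / g₃' ^ 4 = g₄ ^ 3 / g₃ ^ 4 := by
  refine ⟨g₂ * s ^ 2, g₃ * s ^ 3, g₄ * s ^ 4, m2, m3, m4,
    mul_ne_zero hg₃ (pow_ne_zero _ hs), squarefree_scale hsf hs, ?_, ?_, ?_⟩ <;>
  · field_simp

/-- A normal-form Picard curve over `L` whose three invariants lie in a
subfield `k` of `L` has a model over `k`: a normal-form Picard curve with coefficients in `k`
and the same invariant triple. -/
theorem picard_model_over_field_of_invariants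
    {L : Type*} [Field L] (hchar2 : ringChar L ≠ 2) (hchar3 : ringChar L ≠ 3)
    (k : Subfield L) (g₂ g₃ g₄ : L) (hg₃ : g₃ ≠ 0)
    (hsf : Squarefree (X ^ 4 + C g₂ * X ^ 2 + C g₃ * X + C g₄ : L[X]))
    (h₁ : g₂ ^ 3 / g₃ ^ 2 ∈ k) (h₂ : g₂ * g₄ / g₃ ^ 2 ∈ k)
    (h₃ : g₄ ^ 3 / g₃ ^ 4 ∈ k) :
    ∃ g₂' g₃' g₄' : L, g₂' ∈ k ∧ g₃' ∈ k ∧ g₄' ∈ k ∧ g₃' ≠ 0 ∧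
      Squarefree (X ^ 4 + C g₂' * X ^ 2 + C g₃' * X + C g₄' : L[X]) ∧
      g₂' ^ 3 / g₃' ^ 2 = g₂ ^ 3 / g₃ ^ 2 ∧
      g₂' * g₄' / g₃' ^ 2 = g₂ * g₄ / g₃ ^ 2 ∧
      g₄' ^ 3 / g₃' ^ 4 = g₄ ^ 3 / g₃ ^ 4 := by
  by_cases hg2 : g₂ = 0
  · by_cases hg4 : g₄ = 0
    · -- degenerate case: take (0, 1, 0)
      have h3 : (3 : L) ≠ 0 := by
        rw [Ne, (by norm_cast : (3 : L) = ((3 : ℕ) : L)), ringChar.spec,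
          Nat.dvd_prime Nat.prime_three]
        exact mt (or_iff_left hchar3).mp CharP.ringChar_ne_one
      have hder : derivative (X ^ 4 + X : L[X]) = C 4 * X ^ 3 + 1 := by
        simp
        rw [← C_1, ← C_add]; norm_num
      have hsep : (X ^ 4 + X : L[X]).Separable := by
        refine ⟨C (3⁻¹ : L) * (C (-16) * X ^ 2), C (3⁻¹ : L) * (C 4 * X ^ 3 + C 3), ?_⟩
        have key : (C (-16 : L) * X ^ 2) * (X ^ 4 + X)
            + (C (4 : L) * X ^ 3 + C 3) * derivative (X ^ 4 + X : L[X]) = C 3 := by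
          rw [hder]
          simp only [map_neg, map_ofNat]
          ring
        have hone : C (3⁻¹ : L) * C (3 : L) = 1 := by
          rw [← C_mul, inv_mul_cancel₀ h3, C_1]
        linear_combination (C (3⁻¹ : L)) * key + hone
      have hsq : Squarefree (X ^ 4 + X : L[X]) := hsep.squarefree
      refine ⟨0, 1, 0, zero_mem k, one_mem k, zero_mem k, one_ne_zero, ?_, by simp [hg2], ?_, ?_⟩
      · have : (X ^ 4 + C (0:L) * X ^ 2 + C 1 * X + C 0 : L[X]) = X ^ 4 + X := by
          simp
        rw [this]; exact hsq
      · simp [hg2]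
      · simp [hg4]
    · -- g₂ = 0, g₄ ≠ 0 : scale by s = g₃ / g₄
      have hs : g₃ / g₄ ≠ 0 := div_ne_zero hg₃ hg4
      refine model_of_scale k hg₃ hs hsf ?_ ?_ ?_
      · simpa [hg2] using zero_mem k
      · have : g₃ * (g₃ / g₄) ^ 3 = (g₄ ^ 3 / g₃ ^ 4)⁻¹ := by
          field_simp
        rw [this]; exact k.inv_mem h₃
      · have : g₄ * (g₃ / g₄) ^ 4 = (g₄ ^ 3 / g₃ ^ 4)⁻¹ := by
          field_simp
        rw [this]; exact k.inv_mem h₃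
  · -- g₂ ≠ 0 : scale by s = g₂ / g₃
    have hs : g₂ / g₃ ≠ 0 := div_ne_zero hg2 hg₃
    refine model_of_scale k hg₃ hs hsf ?_ ?_ ?_
    · have : g₂ * (g₂ / g₃) ^ 2 = g₂ ^ 3 / g₃ ^ 2 := by
        field_simp
      rw [this]; exact h₁
    · have : g₃ * (g₂ / g₃) ^ 3 = g₂ ^ 3 / g₃ ^ 2 := by
        field_simp
      rw [this]; exact h₁
    · have : g₄ * (g₂ / g₃) ^ 4 = (g₂ ^ 3 / g₃ ^ 2) * (g₂ * g₄ / g₃ ^ 2) := by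
        field_simp
      rw [this]; exact k.mul_mem h₁ h₂
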